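/- Let F be a field, d ≥ 1, q nonzero not a root of unity, t nonzero with t ∉ {q^{d-2n+1} : 1 ≤ n ≤ d}. With E_q, K_q, L_q(t) as above, one has the identity t⁻¹ (E_q - L_q(t)) = [L_q(t), K_q]/(q - q⁻¹), where [A,B] = AB - BA. -/

import Mathlib

/-- The diagonal matrix `K_q` with `(i,i)`-entry `q^(d-2i)`. -/
def Kmat {F : Type*} [Field F] (d : ℕ) (q : F) :
    Matrix (Fin (d + 1)) (Fin (d + 1)) F :=
  Matrix.diagonal fun i => q ^ ((d : ℤ) - 2 * ((i : ℕ) : ℤ))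

/-- The upper bidiagonal matrix `E_q`. -/
def Emat {F : Type*} [Field F] (d : ℕ) (q : F) :
    Matrix (Fin (d + 1)) (Fin (d + 1)) F :=
  Matrix.of fun i j =>
    if (i : ℕ) = (j : ℕ) then q ^ (2 * ((i : ℕ) : ℤ) - (d : ℤ))
    else if (i : ℕ) + 1 = (j : ℕ) then
      q ^ (d : ℤ) - q ^ (2 * ((j : ℕ) : ℤ) - 2 - (d : ℤ))
    else 0

/-- The upper bidiagonal matrix `L_q(t)` with `(i,i)`-entry `q^{2i-d}` and
`(i-1,i)`-entry `(q^d - q^{2i-2-d})/(1 - t q^{d-2i+1})`. -/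
def Lmat {F : Type*} [Field F] (d : ℕ) (q t : F) :
    Matrix (Fin (d + 1)) (Fin (d + 1)) F :=
  Matrix.of fun i j =>
    if (i : ℕ) = (j : ℕ) then q ^ (2 * ((i : ℕ) : ℤ) - (d : ℤ))
    else if (i : ℕ) + 1 = (j : ℕ) then
      (q ^ (d : ℤ) - q ^ (2 * ((j : ℕ) : ℤ) - 2 - (d : ℤ))) /
        (1 - t * q ^ ((d : ℤ) - 2 * ((j : ℕ) : ℤ) + 1))
    else 0

theorem stmt_18 {F : Type*} [Field F] (d : ℕ) (hd : 1 ≤ d) (q : F) (hq : q ≠ 0)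
    (hroot : ∀ n : ℕ, 0 < n → q ^ n ≠ 1) (t : F) (ht : t ≠ 0)
    (htq : ∀ n : ℕ, 1 ≤ n → n ≤ d → t ≠ q ^ ((d : ℤ) - 2 * (n : ℤ) + 1)) :
    t⁻¹ • (Emat d q - Lmat d q t) =
      (q - q⁻¹)⁻¹ • (Lmat d q t * Kmat d q - Kmat d q * Lmat d q t) := by

  have hc : q - q⁻¹ ≠ 0 := by
    have h2 : q ^ (2:ℕ) ≠ 1 := hroot 2 (by norm_num)
    intro h
    apply h2
    have hqq : q = q⁻¹ := sub_eq_zero.mp h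
    calc q ^ (2:ℕ) = q * q := sq q
    _ = q * q⁻¹ := by rw [← hqq]
    _ = 1 := mul_inv_cancel₀ hq
  ext i j
  rw [Matrix.smul_apply, Matrix.smul_apply, Matrix.sub_apply, Matrix.sub_apply,
    Kmat, Matrix.mul_diagonal, Matrix.diagonal_mul]
  simp only [Emat, Lmat, Matrix.of_apply]
  by_cases h1 : (i : ℕ) = (j : ℕ)
  · simp [h1, mul_comm]
  · by_cases h2 : (i : ℕ) + 1 = (j : ℕ)
    · simp only [if_neg h1, if_pos h2]
      have hjd : (j : ℕ) ≤ d := Nat.lt_succ_iff.mp j.isLt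
      have hj1 : 1 ≤ (j : ℕ) := by omega
      have hX : q ^ ((d:ℤ) - 2*((j:ℕ):ℤ)) ≠ 0 := zpow_ne_zero _ hq
      have hden : (1:F) - t * q ^ ((d:ℤ) - 2*((j:ℕ):ℤ) + 1) ≠ 0 := by
        intro h
        have h' : t * q ^ ((d:ℤ) - 2*((j:ℕ):ℤ) + 1) = 1 := (sub_eq_zero.mp h).symm
        have ht' : t = q ^ (2*((j:ℕ):ℤ) - (d:ℤ) - 1) := by
          have h'' : t = (q ^ ((d:ℤ) - 2*((j:ℕ):ℤ) + 1))⁻¹ :=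
            eq_inv_of_mul_eq_one_left h'
          rw [h'', ← zpow_neg]
          congr 1; omega
        refine htq (d - (j:ℕ) + 1) (by omega) (by omega) ?_
        rw [ht']; congr 1
        have : ((d - (j:ℕ) + 1 : ℕ) : ℤ) = (d:ℤ) - (j:ℕ) + 1 := by
          push_cast [Nat.cast_sub hjd]; ring
        rw [this]; ring
      have e1 : q ^ ((d:ℤ) - 2*((i:ℕ):ℤ)) = q ^ ((d:ℤ) - 2*((j:ℕ):ℤ)) * (q * q) := by
        rw [show ((d:ℤ) - 2*((i:ℕ):ℤ)) = ((d:ℤ) - 2*((j:ℕ):ℤ)) + (1 + 1) by omega,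
          zpow_add₀ hq, zpow_add₀ hq, zpow_one]
      have e2 : q ^ ((d:ℤ) - 2*((j:ℕ):ℤ) + 1) = q ^ ((d:ℤ) - 2*((j:ℕ):ℤ)) * q := by
        rw [zpow_add₀ hq, zpow_one]
      have e3 : q ^ (2*((j:ℕ):ℤ) - 2 - (d:ℤ)) = (q ^ ((d:ℤ) - 2*((j:ℕ):ℤ)) * (q * q))⁻¹ := by
        rw [show (2*((j:ℕ):ℤ) - 2 - (d:ℤ)) = -(((d:ℤ) - 2*((j:ℕ):ℤ)) + (1 + 1)) by omega,
          zpow_neg, zpow_add₀ hq, zpow_add₀ hq, zpow_one]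
      rw [e2] at hden
      rw [e1, e2, e3]
      set X := q ^ ((d:ℤ) - 2*((j:ℕ):ℤ)) with hXdef
      set dn := (1:F) - t * (X * q) with hdn
      clear_value X dn
      clear hXdef e1 e2 e3
      have hq2 : q ^ (2:ℕ) - 1 ≠ 0 := sub_ne_zero.mpr (hroot 2 (by norm_num))
      have hcc : q - q⁻¹ = (q ^ (2:ℕ) - 1) * q⁻¹ := by
        field_simp
      rw [hcc]
      field_simp [hX, hden, hq2, hq, ht]
      simp only [smul_eq_mul]
      field_simp
      subst hdn
      ring
    · simp [if_neg h1, if_neg h2]
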